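/- Monotonicity of the candidate indicator in one's own value (truthfulness core): fix r ∈ [0,1), a permutation π of {1,…,n}, a bidder i, and positive reals ℓ_j for each j ≠ i. If 0 < w ≤ w′ and for every j ≠ i it holds that f_r(w) >_π f_r(ℓ_j) (with the left value associated to bidder i and the right to bidder j), then also f_r(w′) >_π f_r(ℓ_j) for every j ≠ i. -/

import Mathlib

/-- Random rounding-down function: `f_r(w) = 2^(r+k)` for the unique `k ∈ ℤ` with
`2^(r+k) ≤ w < 2^(r+k+1)`. -/
noncomputable def fr (r w : ℝ) : ℝ := (2 : ℝ) ^ (r + (⌊Real.logb 2 w - r⌋ : ℝ))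

/-- Lexicographic tie-breaking: `a >_π b`, where `a` is associated with bidder `i`
and `b` with bidder `j`, holds if `a > b`, or `a = b` and `π(i) > π(j)`. -/
def lexGt {n : ℕ} (π : Equiv.Perm (Fin n)) (i j : Fin n) (a b : ℝ) : Prop :=
  b < a ∨ (a = b ∧ π j < π i)

lemma fr_mono (r : ℝ) {w w' : ℝ} (hw : 0 < w) (hww' : w ≤ w') : fr r w ≤ fr r w' := by
  unfold fr
  apply Real.rpow_le_rpow_left_iff (by norm_num : (1:ℝ) < 2) |>.mpr
  have : Real.logb 2 w ≤ Real.logb 2 w' :=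
    Real.logb_le_logb_of_le (by norm_num) hw hww'
  have := Int.floor_le_floor (R := ℝ) (sub_le_sub_right this r)
  have : ((⌊Real.logb 2 w - r⌋ : ℤ) : ℝ) ≤ ((⌊Real.logb 2 w' - r⌋ : ℤ) : ℝ) := by
    exact_mod_cast this
  linarith

/-- Monotonicity of the candidate indicator in one's own value (truthfulness core). -/
theorem candidate_monotone_in_value {n : ℕ}
    (r : ℝ) (hr : r ∈ Set.Ico (0:ℝ) 1)
    (π : Equiv.Perm (Fin n)) (i : Fin n)
    (ℓ : Fin n → ℝ) (hℓ : ∀ j, j ≠ i → 0 < ℓ j)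
    (w w' : ℝ) (hw : 0 < w) (hww' : w ≤ w')
    (h : ∀ j, j ≠ i → lexGt π i j (fr r w) (fr r (ℓ j))) :
    ∀ j, j ≠ i → lexGt π i j (fr r w') (fr r (ℓ j)) := by
  intro j hj
  have hm := fr_mono r hw hww'
  rcases h j hj with hlt | ⟨heq, hp⟩
  · exact Or.inl (lt_of_lt_of_le hlt hm)
  · rcases lt_or_eq_of_le hm with h' | h'
    · exact Or.inl (heq ▸ h')
    · exact Or.inr ⟨h' ▸ heq, hp⟩
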